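/- arXiv:1703.07251 — 6 statements merged into one kernel-verified Lean document; each statement's English description precedes it below -/
import Mathlib

section
/- Let e_1,…,e_k ∈ {+1,−1}^n for some k ≥ 1 and let σ^1,…,σ^k ∈ {+1,−1}. Suppose there exist a vector R ∈ ℝ^n and λ = (λ^1,…,λ^k) with all λ^ℓ ≥ 0, ‖R‖ ≤ 1 and λ^1 + ⋯ + λ^k = 1, such that R − L ∈ Q*, where L = ∑_ℓ λ^ℓ σ^ℓ e_ℓ. Then for every a ∈ Q, if σ^ℓ (e_ℓ a) ≥ 0 for all ℓ = 1,…,k, then there exists ℓ with |e_ℓ a| ≤ ‖a‖. -/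
/-- The cone `Q = {a : a₁ ≥ a₂ ≥ ⋯ ≥ aₙ ≥ 0}`. -/
def inQ {n : ℕ} (a : Fin n → ℝ) : Prop :=
  (∀ i j : Fin n, i ≤ j → a j ≤ a i) ∧ ∀ i, 0 ≤ a i

/-- The dual cone `Q*`: vectors `V` with `V·a ≥ 0` for all `a ∈ Q`. -/
def inQdual {n : ℕ} (V : Fin n → ℝ) : Prop :=
  ∀ a : Fin n → ℝ, inQ a → 0 ≤ ∑ i, V i * a i

theorem stmt_2 (n k : ℕ) (hk : 1 ≤ k)
    (e : Fin k → Fin n → ℝ) (he : ∀ ℓ i, e ℓ i = 1 ∨ e ℓ i = -1)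
    (σ : Fin k → ℝ) (hσ : ∀ ℓ, σ ℓ = 1 ∨ σ ℓ = -1)
    (R : Fin n → ℝ) (lam : Fin k → ℝ)
    (hlam : ∀ ℓ, 0 ≤ lam ℓ)
    (hRnorm : Real.sqrt (∑ i, R i ^ 2) ≤ 1)
    (hlamsum : ∑ ℓ, lam ℓ = 1)
    (hdual : inQdual (fun i => R i - ∑ ℓ, lam ℓ * σ ℓ * e ℓ i))
    (a : Fin n → ℝ) (ha : inQ a)
    (hsign : ∀ ℓ, 0 ≤ σ ℓ * ∑ i, e ℓ i * a i) :
    ∃ ℓ, |∑ i, e ℓ i * a i| ≤ Real.sqrt (∑ i, a i ^ 2) := by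
  by_contra h
  push_neg at h
  set A := Real.sqrt (∑ i, a i ^ 2) with hA
  have hA0 : 0 ≤ A := Real.sqrt_nonneg _
  have hS : ∀ ℓ, A < σ ℓ * ∑ i, e ℓ i * a i := by
    intro ℓ
    have habs : |∑ i, e ℓ i * a i| = σ ℓ * ∑ i, e ℓ i * a i := by
      rcases hσ ℓ with hs | hs
      · have := hsign ℓ; rw [hs, one_mul] at this ⊢; exact abs_of_nonneg this
      · have := hsign ℓ; rw [hs] at this ⊢
        rw [abs_of_nonpos (by linarith)]; ring
    have := h ℓ
    rw [habs] at this
    linarith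
  -- Cauchy–Schwarz: R·a ≤ A
  have hCS : ∑ i, R i * a i ≤ A := by
    calc ∑ i, R i * a i
        ≤ Real.sqrt (∑ i, R i ^ 2) * Real.sqrt (∑ i, a i ^ 2) :=
          Real.sum_mul_le_sqrt_mul_sqrt Finset.univ R a
      _ ≤ 1 * A := mul_le_mul_of_nonneg_right hRnorm hA0
      _ = A := one_mul A
  have hdual' := hdual a ha
  have hswap : ∑ i, (∑ ℓ, lam ℓ * σ ℓ * e ℓ i) * a i
      = ∑ ℓ, lam ℓ * (σ ℓ * ∑ i, e ℓ i * a i) := by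
    simp only [Finset.sum_mul]
    rw [Finset.sum_comm]
    refine Finset.sum_congr rfl fun ℓ _ => ?_
    rw [Finset.mul_sum, Finset.mul_sum]
    exact Finset.sum_congr rfl fun i _ => by ring
  have hsub : ∑ i, (R i - ∑ ℓ, lam ℓ * σ ℓ * e ℓ i) * a i
      = ∑ i, R i * a i - ∑ i, (∑ ℓ, lam ℓ * σ ℓ * e ℓ i) * a i := by
    simp [sub_mul, Finset.sum_sub_distrib]
  rw [hsub, hswap] at hdual'
  have hLa : ∑ ℓ, lam ℓ * (σ ℓ * ∑ i, e ℓ i * a i) ≤ A := by linarith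
  obtain ⟨ℓ₀, hℓ₀⟩ : ∃ ℓ, 0 < lam ℓ := by
    by_contra hc; push_neg at hc
    have : ∑ ℓ, lam ℓ = 0 :=
      Finset.sum_eq_zero fun ℓ _ => le_antisymm (hc ℓ) (hlam ℓ)
    rw [this] at hlamsum; norm_num at hlamsum
  have hge : ∑ ℓ, lam ℓ * A < ∑ ℓ, lam ℓ * (σ ℓ * ∑ i, e ℓ i * a i) := by
    apply Finset.sum_lt_sum
    · intro ℓ _; exact mul_le_mul_of_nonneg_left (hS ℓ).le (hlam ℓ)
    · exact ⟨ℓ₀, Finset.mem_univ _, mul_lt_mul_of_pos_left (hS ℓ₀) hℓ₀⟩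
  rw [← Finset.sum_mul, hlamsum, one_mul] at hge
  linarith
end

section
/- Let n ≥ 2 and let R = (r_1, r_2, 0, …, 0) ∈ ℝ^n with r_1 ≥ r_2 > 0. Then #{ε ∈ {+1,−1}^n : |εR| < ‖R‖} = 2^{n−1}, i.e. exactly half of all sign vectors. Moreover, there exists δ > 0 (depending on R) such that for every a ∈ ℝ^n with ‖R − a‖ < δ one also has #{ε ∈ {+1,−1}^n : |εa| < ‖a‖} = 2^{n−1}. Consequently, for every k with 2 ≤ k ≤ n there exists a ∈ ℝ^n with a_1 ≥ a_2 ≥ ⋯ ≥ a_k > 0 and a_{k+1} = ⋯ = a_n = 0 such that #{ε ∈ {+1,−1}^n : |εa| < ‖a‖} = 2^{n−1}; in particular c_k ≤ 1/2 for all 2 ≤ k ≤ n. -/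
open scoped Classical

/-- The number of sign vectors `ε ∈ {+1,-1}^n` with `|εa| < ‖a‖`. -/
noncomputable def strictCount {n : ℕ} (a : Fin n → ℝ) : ℕ :=
  ((Finset.univ : Finset (Fin n → Bool)).filter
    (fun σ => |∑ i, (if σ i then (1 : ℝ) else -1) * a i|
      < Real.sqrt (∑ i, a i ^ 2))).card

section aux

variable {n : ℕ}

private lemma sum_two (hn : 2 ≤ n) (f : Fin n → ℝ)
    (hf : ∀ i : Fin n, 2 ≤ (i : ℕ) → f i = 0) :
    ∑ i, f i = f ⟨0, (by omega : n > 0)⟩ + f ⟨1, (by omega : n > 1)⟩ := by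
  rw [← Finset.sum_pair (a := (⟨0, (by omega : n > 0)⟩ : Fin n)) (b := ⟨1, (by omega : n > 1)⟩)
    (by simp [Fin.ext_iff])]
  refine (Finset.sum_subset (Finset.subset_univ _) ?_).symm
  intro i _ hi
  apply hf
  simp only [Finset.mem_insert, Finset.mem_singleton, not_or, Fin.ext_iff] at hi
  omega

private lemma abs_lt_sqrt_iff (x s : ℝ) : |x| < Real.sqrt s ↔ x ^ 2 < s := by
  rw [Real.lt_sqrt (abs_nonneg x), sq_abs]

private lemma sqrt_sum_sq_eq_norm (a : Fin n → ℝ) :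
    Real.sqrt (∑ i, a i ^ 2) = ‖(WithLp.equiv 2 (Fin n → ℝ)).symm a‖ := by
  rw [EuclideanSpace.norm_eq]
  simp [Real.norm_eq_abs, sq_abs]

private lemma norm_diff (a b : Fin n → ℝ) :
    |Real.sqrt (∑ i, a i ^ 2) - Real.sqrt (∑ i, b i ^ 2)|
      ≤ Real.sqrt (∑ i, (a i - b i) ^ 2) := by
  rw [sqrt_sum_sq_eq_norm, sqrt_sum_sq_eq_norm,
    sqrt_sum_sq_eq_norm (fun i => a i - b i)]
  have hsub : (WithLp.equiv 2 (Fin n → ℝ)).symm a - (WithLp.equiv 2 (Fin n → ℝ)).symm b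
      = (WithLp.equiv 2 (Fin n → ℝ)).symm (fun i => a i - b i) := rfl
  rw [← hsub]
  exact abs_norm_sub_norm_le _ _

private lemma coord_le (a : Fin n → ℝ) (i : Fin n) :
    |a i| ≤ Real.sqrt (∑ j, a j ^ 2) := by
  rw [← Real.sqrt_sq_eq_abs]
  apply Real.sqrt_le_sqrt
  exact Finset.single_le_sum (f := fun j => a j ^ 2) (fun j _ => sq_nonneg _)
    (Finset.mem_univ i)

private lemma S_diff_le (σ : Fin n → Bool) (a b : Fin n → ℝ) :
    |∑ i, (if σ i then (1:ℝ) else -1) * a i - ∑ i, (if σ i then (1:ℝ) else -1) * b i|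
      ≤ n * Real.sqrt (∑ i, (a i - b i) ^ 2) := by
  rw [← Finset.sum_sub_distrib]
  calc |∑ i, ((if σ i then (1:ℝ) else -1) * a i - (if σ i then (1:ℝ) else -1) * b i)|
      ≤ ∑ i, |(if σ i then (1:ℝ) else -1) * a i - (if σ i then (1:ℝ) else -1) * b i| :=
        Finset.abs_sum_le_sum_abs _ _
    _ ≤ ∑ _i : Fin n, Real.sqrt (∑ j, (a j - b j) ^ 2) := by
        apply Finset.sum_le_sum
        intro i _
        have he : (if σ i then (1:ℝ) else -1) * a i - (if σ i then (1:ℝ) else -1) * b i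
            = (if σ i then (1:ℝ) else -1) * (a i - b i) := by ring
        rw [he, abs_mul]
        have h1 : |(if σ i then (1:ℝ) else -1)| = 1 := by cases σ i <;> simp
        rw [h1, one_mul]
        exact coord_le (fun j => a j - b j) i
    _ = n * Real.sqrt (∑ j, (a j - b j) ^ 2) := by
        simp [Finset.sum_const, nsmul_eq_mul]

private lemma card_ne (hn : 2 ≤ n) :
    ((Finset.univ : Finset (Fin n → Bool)).filter
      (fun σ => σ ⟨0, (by omega : n > 0)⟩ ≠ σ ⟨1, (by omega : n > 1)⟩)).card = 2 ^ (n - 1) := by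
  set i0 : Fin n := ⟨0, (by omega : n > 0)⟩ with hi0
  set i1 : Fin n := ⟨1, (by omega : n > 1)⟩ with hi1
  have hne : i0 ≠ i1 := by simp [hi0, hi1, Fin.ext_iff]
  have hcard : ((Finset.univ : Finset (Fin n → Bool)).filter
        (fun σ => σ i0 ≠ σ i1)).card
      + ((Finset.univ : Finset (Fin n → Bool)).filter
        (fun σ => ¬ σ i0 ≠ σ i1)).card = 2 ^ n := by
    rw [Finset.card_filter_add_card_filter_not]
    simp
  have heq : ((Finset.univ : Finset (Fin n → Bool)).filter
        (fun σ => σ i0 ≠ σ i1)).card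
      = ((Finset.univ : Finset (Fin n → Bool)).filter
        (fun σ => ¬ σ i0 ≠ σ i1)).card := by
    refine Finset.card_bij' (fun σ _ => Function.update σ i0 (!σ i0))
      (fun σ _ => Function.update σ i0 (!σ i0)) ?_ ?_ ?_ ?_
    · intro σ hσ
      simp only [Finset.mem_filter, Finset.mem_univ, true_and] at hσ ⊢
      rw [Function.update_self, Function.update_of_ne hne.symm]
      revert hσ
      cases σ i0 <;> cases σ i1 <;> simp
    · intro σ hσ
      simp only [Finset.mem_filter, Finset.mem_univ, true_and] at hσ ⊢
      rw [Function.update_self, Function.update_of_ne hne.symm]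
      revert hσ
      cases σ i0 <;> cases σ i1 <;> simp
    · intro σ _
      funext x
      by_cases hx : x = i0
      · subst hx; simp [Function.update_apply]
      · simp [Function.update_apply, hx]
    · intro σ _
      funext x
      by_cases hx : x = i0
      · subst hx; simp [Function.update_apply]
      · simp [Function.update_apply, hx]
  have hpow : 2 ^ n = 2 * 2 ^ (n - 1) := by
    rw [← pow_succ']
    congr 1
    exact (Nat.sub_add_cancel (le_trans one_le_two hn)).symm
  have h2 : 2 * ((Finset.univ : Finset (Fin n → Bool)).filter
      (fun σ => σ i0 ≠ σ i1)).card = 2 * 2 ^ (n - 1) := by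
    rw [two_mul]
    nth_rewrite 2 [heq]
    rw [hcard, hpow]
  exact Nat.eq_of_mul_eq_mul_left (by norm_num) h2

private lemma charR (hn : 2 ≤ n) (R : Fin n → ℝ)
    (h21 : R ⟨1, (by omega : n > 1)⟩ ≤ R ⟨0, (by omega : n > 0)⟩)
    (h2pos : 0 < R ⟨1, (by omega : n > 1)⟩)
    (hrest : ∀ i : Fin n, 2 ≤ (i : ℕ) → R i = 0) (σ : Fin n → Bool) :
    (σ ⟨0, (by omega : n > 0)⟩ ≠ σ ⟨1, (by omega : n > 1)⟩ →
       |∑ i, (if σ i then (1:ℝ) else -1) * R i| < Real.sqrt (∑ i, R i ^ 2)) ∧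
    (σ ⟨0, (by omega : n > 0)⟩ = σ ⟨1, (by omega : n > 1)⟩ →
       Real.sqrt (∑ i, R i ^ 2) < |∑ i, (if σ i then (1:ℝ) else -1) * R i|) := by
  set i0 : Fin n := ⟨0, (by omega : n > 0)⟩ with hi0
  set i1 : Fin n := ⟨1, (by omega : n > 1)⟩ with hi1
  have hS : ∑ i, (if σ i then (1:ℝ) else -1) * R i
      = (if σ i0 then (1:ℝ) else -1) * R i0 + (if σ i1 then (1:ℝ) else -1) * R i1 :=
    sum_two hn _ (fun i hi => by rw [hrest i hi, mul_zero])
  have hQ : (∑ i, R i ^ 2) = R i0 ^ 2 + R i1 ^ 2 :=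
    sum_two hn _ (fun i hi => by rw [hrest i hi]; ring)
  rw [hS, hQ]
  have h1 : 0 < R i0 := lt_of_lt_of_le h2pos h21
  have hmul : 0 < R i0 * R i1 := mul_pos h1 h2pos
  set c0 : ℝ := if σ i0 then 1 else -1 with hc0
  set c1 : ℝ := if σ i1 then 1 else -1 with hc1
  have hc0sq : c0 ^ 2 = 1 := by rw [hc0]; cases σ i0 <;> simp
  have hc1sq : c1 ^ 2 = 1 := by rw [hc1]; cases σ i1 <;> simp
  have e : (c0 * R i0 + c1 * R i1) ^ 2
      = c0 ^ 2 * R i0 ^ 2 + 2 * (c0 * c1) * (R i0 * R i1) + c1 ^ 2 * R i1 ^ 2 := by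
    ring
  constructor
  · intro hne
    have hcc : c0 * c1 = -1 := by
      rw [hc0, hc1]
      cases hb : σ i0 <;> cases hc : σ i1 <;> simp_all
    rw [abs_lt_sqrt_iff, e, hc0sq, hc1sq, hcc]
    nlinarith [hmul]
  · intro heq
    have hcc : c0 * c1 = 1 := by
      rw [hc0, hc1]
      cases hb : σ i0 <;> cases hc : σ i1 <;> simp_all
    have hx2 : (c0 * R i0 + c1 * R i1) ^ 2
        = R i0 ^ 2 + R i1 ^ 2 + 2 * (R i0 * R i1) := by
      rw [e, hc0sq, hc1sq, hcc]; ring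
    have hxne : c0 * R i0 + c1 * R i1 ≠ 0 := by
      intro h0
      rw [h0] at hx2
      simp at hx2
      nlinarith [hmul, sq_nonneg (R i0 + R i1)]
    rw [Real.sqrt_lt' (abs_pos.mpr hxne), sq_abs, hx2]
    nlinarith [hmul]

private lemma stable (hn : 2 ≤ n) (R : Fin n → ℝ)
    (h21 : R ⟨1, (by omega : n > 1)⟩ ≤ R ⟨0, (by omega : n > 0)⟩)
    (h2pos : 0 < R ⟨1, (by omega : n > 1)⟩)
    (hrest : ∀ i : Fin n, 2 ≤ (i : ℕ) → R i = 0) :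
    ∃ δ > (0:ℝ), ∀ a : Fin n → ℝ,
      Real.sqrt (∑ i, (R i - a i) ^ 2) < δ → strictCount a = 2 ^ (n - 1) := by
  set i0 : Fin n := ⟨0, (by omega : n > 0)⟩ with hi0
  set i1 : Fin n := ⟨1, (by omega : n > 1)⟩ with hi1
  set NR := Real.sqrt (∑ i, R i ^ 2) with hNR
  have hgpos : ∀ σ : Fin n → Bool,
      0 < abs (NR - abs (∑ i, (if σ i then (1:ℝ) else -1) * R i)) := by
    intro σ
    have h := charR hn R h21 h2pos hrest σ
    rcases ne_or_eq (σ i0) (σ i1) with hne | heq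
    · exact abs_pos.mpr (sub_ne_zero.mpr (ne_of_gt (h.1 hne)))
    · exact abs_pos.mpr (sub_ne_zero.mpr (ne_of_lt (h.2 heq)))
  set m := Finset.univ.inf' Finset.univ_nonempty
    (fun σ : Fin n → Bool =>
      abs (NR - abs (∑ i, (if σ i then (1:ℝ) else -1) * R i))) with hm
  have hmpos : 0 < m := (Finset.lt_inf'_iff _).mpr (fun σ _ => hgpos σ)
  refine ⟨m / (n + 1), by positivity, ?_⟩
  intro a hd
  set d := Real.sqrt (∑ i, (R i - a i) ^ 2) with hdd
  have hd0 : 0 ≤ d := Real.sqrt_nonneg _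
  have hd1 : ((n : ℝ) + 1) * d < m := by
    rw [lt_div_iff₀ (by positivity)] at hd
    linarith
  have key : ((Finset.univ : Finset (Fin n → Bool)).filter
      (fun σ => |∑ i, (if σ i then (1:ℝ) else -1) * a i| < Real.sqrt (∑ i, a i ^ 2)))
      = Finset.univ.filter (fun σ : Fin n → Bool => σ i0 ≠ σ i1) := by
    ext σ
    simp only [Finset.mem_filter, Finset.mem_univ, true_and]
    have hgσ : m ≤ abs (NR - abs (∑ i, (if σ i then (1:ℝ) else -1) * R i)) :=
      hm ▸ Finset.inf'_le _ (Finset.mem_univ σ)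
    have hsq : (∑ i, (a i - R i) ^ 2) = ∑ i, (R i - a i) ^ 2 :=
      Finset.sum_congr rfl (fun i _ => by ring)
    have hSb : |∑ i, (if σ i then (1:ℝ) else -1) * a i
        - ∑ i, (if σ i then (1:ℝ) else -1) * R i| ≤ n * d := by
      have h := S_diff_le σ a R
      rw [hsq] at h
      exact h
    have hSb' := abs_le.mp (le_trans (abs_abs_sub_abs_le_abs_sub _ _) hSb)
    have hNb := abs_le.mp (by
      have h := norm_diff a R
      rw [hsq] at h
      exact h)
    constructor
    · intro hlt
      by_contra hne'
      have heq : σ i0 = σ i1 := hne'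
      have h2 := (charR hn R h21 h2pos hrest σ).2 heq
      have habs : abs (NR - abs (∑ i, (if σ i then (1:ℝ) else -1) * R i))
          = abs (∑ i, (if σ i then (1:ℝ) else -1) * R i) - NR := by
        rw [abs_of_nonpos (by linarith)]; ring
      rw [habs] at hgσ
      linarith [hSb'.1, hSb'.2, hNb.1, hNb.2]
    · intro hne'
      have h2 := (charR hn R h21 h2pos hrest σ).1 hne'
      have habs : abs (NR - abs (∑ i, (if σ i then (1:ℝ) else -1) * R i))
          = NR - abs (∑ i, (if σ i then (1:ℝ) else -1) * R i) := by
        rw [abs_of_nonneg (by linarith)]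
      rw [habs] at hgσ
      linarith [hSb'.1, hSb'.2, hNb.1, hNb.2]
  rw [strictCount, key, card_ne hn]

end aux

theorem stmt_10 (n : ℕ) (hn : 2 ≤ n) (R : Fin n → ℝ)
    (h21 : R ⟨1, by omega⟩ ≤ R ⟨0, by omega⟩)
    (h2pos : 0 < R ⟨1, by omega⟩)
    (hrest : ∀ i : Fin n, 2 ≤ (i : ℕ) → R i = 0) :
    strictCount R = 2 ^ (n - 1) ∧
    (∃ δ > (0 : ℝ), ∀ a : Fin n → ℝ,
        Real.sqrt (∑ i, (R i - a i) ^ 2) < δ → strictCount a = 2 ^ (n - 1)) ∧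
    (∀ k : ℕ, 2 ≤ k → k ≤ n →
      ∃ a : Fin n → ℝ,
        (∀ i j : Fin n, i ≤ j → (j : ℕ) < k → a j ≤ a i) ∧
        (∀ i : Fin n, (i : ℕ) < k → 0 < a i) ∧
        (∀ i : Fin n, k ≤ (i : ℕ) → a i = 0) ∧
        strictCount a = 2 ^ (n - 1)) := by
  obtain ⟨δ, hδ, hstab⟩ := stable hn R h21 h2pos hrest
  have h1 : 0 < R ⟨0, by omega⟩ := lt_of_lt_of_le h2pos h21
  have part1 : strictCount R = 2 ^ (n - 1) := by
    apply hstab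
    simpa using hδ
  refine ⟨part1, ⟨δ, hδ, hstab⟩, ?_⟩
  intro k hk2 hkn
  set t := min (R ⟨1, by omega⟩) (δ / (n + 1)) with ht
  have htpos : 0 < t := lt_min h2pos (by positivity)
  have ht1 : t ≤ R ⟨1, by omega⟩ := min_le_left _ _
  have ht2 : t ≤ δ / (n + 1) := min_le_right _ _
  set a : Fin n → ℝ := fun i =>
    if (i : ℕ) < 2 then R i else if (i : ℕ) < k then t else 0 with ha
  have haval0 : ∀ i : Fin n, (i : ℕ) < 2 → a i = R i := by
    intro i hi
    simp only [ha]
    rw [if_pos hi]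
  have haval1 : ∀ i : Fin n, 2 ≤ (i : ℕ) → (i : ℕ) < k → a i = t := by
    intro i hi hik
    simp only [ha]
    rw [if_neg (by omega), if_pos hik]
  have haval2 : ∀ i : Fin n, k ≤ (i : ℕ) → a i = 0 := by
    intro i hik
    simp only [ha]
    rw [if_neg (by omega), if_neg (by omega)]
  refine ⟨a, ?_, ?_, haval2, ?_⟩
  · -- monotone
    intro i j hij hjk
    have hij' : (i : ℕ) ≤ (j : ℕ) := hij
    by_cases hj2 : (j : ℕ) < 2
    · have hi2 : (i : ℕ) < 2 := lt_of_le_of_lt hij' hj2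
      rw [haval0 i hi2, haval0 j hj2]
      have hi01 : (i : ℕ) = 0 ∨ (i : ℕ) = 1 := by omega
      have hj01 : (j : ℕ) = 0 ∨ (j : ℕ) = 1 := by omega
      rcases hi01 with hi | hi <;> rcases hj01 with hj | hj
      · have : i = j := Fin.ext (by omega)
        rw [this]
      · have ei : i = ⟨0, by omega⟩ := Fin.ext hi
        have ej : j = ⟨1, by omega⟩ := Fin.ext hj
        rw [ei, ej]; exact h21
      · omega
      · have : i = j := Fin.ext (by omega)
        rw [this]
    · rw [haval1 j (by omega) hjk]
      by_cases hi2 : (i : ℕ) < 2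
      · rw [haval0 i hi2]
        have hi01 : (i : ℕ) = 0 ∨ (i : ℕ) = 1 := by omega
        rcases hi01 with hi | hi
        · have ei : i = ⟨0, by omega⟩ := Fin.ext hi
          rw [ei]; exact le_trans ht1 h21
        · have ei : i = ⟨1, by omega⟩ := Fin.ext hi
          rw [ei]; exact ht1
      · rw [haval1 i (by omega) (lt_of_le_of_lt hij' hjk)]
  · -- positive
    intro i hik
    by_cases hi2 : (i : ℕ) < 2
    · rw [haval0 i hi2]
      have hi01 : (i : ℕ) = 0 ∨ (i : ℕ) = 1 := by omega
      rcases hi01 with hi | hi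
      · have ei : i = ⟨0, by omega⟩ := Fin.ext hi
        rw [ei]; exact h1
      · have ei : i = ⟨1, by omega⟩ := Fin.ext hi
        rw [ei]; exact h2pos
    · rw [haval1 i (by omega) hik]; exact htpos
  · -- count
    apply hstab
    rw [Real.sqrt_lt' hδ]
    have hterm : ∀ i : Fin n, (R i - a i) ^ 2 ≤ t ^ 2 := by
      intro i
      by_cases hi2 : (i : ℕ) < 2
      · rw [haval0 i hi2]
        nlinarith [sq_nonneg t]
      · by_cases hik : (i : ℕ) < k
        · rw [haval1 i (by omega) hik, hrest i (by omega)]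
          nlinarith [sq_nonneg t]
        · rw [haval2 i (by omega), hrest i (by omega)]
          nlinarith [sq_nonneg t]
    have hsum : (∑ i, (R i - a i) ^ 2) ≤ (n : ℝ) * t ^ 2 := by
      have h := Finset.sum_le_card_nsmul Finset.univ (fun i => (R i - a i) ^ 2) (t ^ 2)
        (fun i _ => hterm i)
      simpa [Finset.card_univ, nsmul_eq_mul] using h
    have hlast : (n : ℝ) * t ^ 2 < δ ^ 2 := by
      have hn1 : (0:ℝ) < (n : ℝ) + 1 := by positivity
      have htd : t ^ 2 ≤ (δ / (n + 1)) ^ 2 := by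
        apply pow_le_pow_left₀ (le_of_lt htpos) ht2
      have h2 : (n : ℝ) * (δ / (n + 1)) ^ 2 < δ ^ 2 := by
        rw [div_pow, ← mul_div_assoc, div_lt_iff₀ (by positivity)]
        have hδ2 : 0 < δ ^ 2 := by positivity
        nlinarith [mul_nonneg (le_of_lt hδ2) (sq_nonneg ((n:ℝ))),
          mul_nonneg (le_of_lt hδ2) (Nat.cast_nonneg n : (0:ℝ) ≤ (n:ℝ))]
      calc (n : ℝ) * t ^ 2 ≤ (n : ℝ) * (δ / (n + 1)) ^ 2 := by
            apply mul_le_mul_of_nonneg_left htd (by positivity)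
        _ < δ ^ 2 := h2
    linarith
end

section
/- If ε_1, ε_2 ∈ {+1,−1}^n, then ε_1 ∨ ε_2 ∈ {+1,−1}^n and ε_1 ∧ ε_2 ∈ {+1,−1}^n. -/
/-- The vector of cumulative sums of `x`: `cumsum x m = x 0 + ⋯ + x m`. -/
def cumsum {n : ℕ} (x : Fin n → ℝ) (m : Fin n) : ℝ :=
  ∑ i ∈ Finset.univ.filter (fun i => i ≤ m), x i

lemma cumsum_zero {n : ℕ} (x : Fin n → ℝ) (i : Fin n) (h : i.val = 0) :
    cumsum x i = x i := by
  unfold cumsum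
  have : Finset.univ.filter (fun j => j ≤ i) = {i} := by
    ext a
    simp only [Finset.mem_filter, Finset.mem_univ, true_and, Finset.mem_singleton,
      Fin.le_def, Fin.ext_iff, h]
    omega
  rw [this, Finset.sum_singleton]

lemma cumsum_succ {n : ℕ} (x : Fin n → ℝ) (i j : Fin n) (h : i.val = j.val + 1) :
    cumsum x i = cumsum x j + x i := by
  unfold cumsum
  have hset : Finset.univ.filter (fun a => a ≤ i) =
      insert i (Finset.univ.filter (fun a => a ≤ j)) := by
    ext a
    simp only [Finset.mem_filter, Finset.mem_univ, true_and, Finset.mem_insert,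
      Fin.le_def, Fin.ext_iff, h]
    omega
  rw [hset, Finset.sum_insert (by simp only [Finset.mem_filter, Finset.mem_univ, true_and, Fin.le_def]; omega)]
  ring

lemma key_step (a b s t : ℝ) (k : ℤ) (hk : a - b = 2 * k)
    (hs : s = 1 ∨ s = -1) (ht : t = 1 ∨ t = -1) :
    (max (a + s) (b + t) - max a b = 1 ∨ max (a + s) (b + t) - max a b = -1) ∧
    (min (a + s) (b + t) - min a b = 1 ∨ min (a + s) (b + t) - min a b = -1) := by
  have hs1 : -1 ≤ s ∧ s ≤ 1 := by rcases hs with h | h <;> simp [h]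
  have ht1 : -1 ≤ t ∧ t ≤ 1 := by rcases ht with h | h <;> simp [h]
  rcases lt_trichotomy a b with h | h | h
  · have hk0 : k < 0 := by
      by_contra hc; push_neg at hc
      have h0 : (0:ℝ) ≤ (k:ℝ) := by exact_mod_cast hc
      nlinarith
    have hk1 : (k : ℝ) + 1 ≤ 0 := by exact_mod_cast (by omega : k + 1 ≤ 0)
    have hab : b ≥ a + 2 := by linarith
    rw [max_eq_right (by linarith), max_eq_right h.le,
      min_eq_left (by linarith), min_eq_left h.le]
    constructor
    · rcases ht with h' | h' <;> [left; right] <;> rw [h'] <;> ring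
    · rcases hs with h' | h' <;> [left; right] <;> rw [h'] <;> ring
  · subst h
    rw [max_self, min_self]
    constructor <;> rcases hs with h' | h' <;> rcases ht with h'' | h'' <;>
      rw [h', h''] <;> simp [max_def, min_def]
  · have hk1 : (1 : ℝ) ≤ k := by
      have : 0 < k := by exact_mod_cast (by nlinarith : (0 : ℝ) < k)
      exact_mod_cast this
    have hab : a ≥ b + 2 := by linarith
    rw [max_eq_left (by linarith), max_eq_left h.le,
      min_eq_right (by linarith), min_eq_right h.le]
    constructor
    · rcases hs with h' | h' <;> [left; right] <;> rw [h'] <;> ring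
    · rcases ht with h' | h' <;> [left; right] <;> rw [h'] <;> ring

theorem stmt_11 (n : ℕ) (e₁ e₂ : Fin n → ℝ)
    (he₁ : ∀ i, e₁ i = 1 ∨ e₁ i = -1) (he₂ : ∀ i, e₂ i = 1 ∨ e₂ i = -1)
    (sup inf : Fin n → ℝ)
    (hsup : ∀ m, cumsum sup m = max (cumsum e₁ m) (cumsum e₂ m))
    (hinf : ∀ m, cumsum inf m = min (cumsum e₁ m) (cumsum e₂ m)) :
    (∀ i, sup i = 1 ∨ sup i = -1) ∧ (∀ i, inf i = 1 ∨ inf i = -1) := by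
  -- parity: the difference of cumsums is twice an integer
  have hpar : ∀ i : Fin n, ∃ k : ℤ, e₁ i - e₂ i = 2 * k := by
    intro i
    rcases he₁ i with h1 | h1 <;> rcases he₂ i with h2 | h2 <;>
      [exact ⟨0, by rw [h1, h2]; ring⟩; exact ⟨1, by rw [h1, h2]; ring⟩;
       exact ⟨-1, by rw [h1, h2]; push_cast; ring⟩; exact ⟨0, by rw [h1, h2]; ring⟩]
  choose c hc using hpar
  have hdiff : ∀ m : Fin n, ∃ k : ℤ, cumsum e₁ m - cumsum e₂ m = 2 * k := by
    intro m
    refine ⟨∑ i ∈ Finset.univ.filter (fun i => i ≤ m), c i, ?_⟩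
    unfold cumsum
    rw [← Finset.sum_sub_distrib]
    push_cast
    rw [Finset.mul_sum]
    exact Finset.sum_congr rfl fun i _ => hc i
  -- main claim, per index
  have main : ∀ i : Fin n, (sup i = 1 ∨ sup i = -1) ∧ (inf i = 1 ∨ inf i = -1) := by
    intro i
    rcases Nat.eq_zero_or_eq_succ_pred i.val with h0 | hsucc
    · have hs0 := cumsum_zero sup i h0
      have hi0 := cumsum_zero inf i h0
      have h10 := cumsum_zero e₁ i h0
      have h20 := cumsum_zero e₂ i h0
      have hS : sup i = max (e₁ i) (e₂ i) := by rw [← hs0, hsup, h10, h20]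
      have hI : inf i = min (e₁ i) (e₂ i) := by rw [← hi0, hinf, h10, h20]
      rw [hS, hI]
      constructor <;> rcases he₁ i with h1 | h1 <;> rcases he₂ i with h2 | h2 <;>
        rw [h1, h2] <;> simp [max_def, min_def]
    · set j : Fin n := ⟨i.val - 1, by omega⟩ with hj
      have hij : i.val = j.val + 1 := by simp [hj]; omega
      have hS := cumsum_succ sup i j hij
      have hI := cumsum_succ inf i j hij
      have h1 := cumsum_succ e₁ i j hij
      have h2 := cumsum_succ e₂ i j hij
      obtain ⟨k, hk⟩ := hdiff j
      have := key_step (cumsum e₁ j) (cumsum e₂ j) (e₁ i) (e₂ i) k hk (he₁ i) (he₂ i)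
      have hsupi : sup i = max (cumsum e₁ j + e₁ i) (cumsum e₂ j + e₂ i)
          - max (cumsum e₁ j) (cumsum e₂ j) := by
        have := hsup i
        rw [hS, hsup j, h1, h2] at this
        linarith
      have hinfi : inf i = min (cumsum e₁ j + e₁ i) (cumsum e₂ j + e₂ i)
          - min (cumsum e₁ j) (cumsum e₂ j) := by
        have := hinf i
        rw [hI, hinf j, h1, h2] at this
        linarith
      rw [hsupi, hinfi]
      exact this
  exact ⟨fun i => (main i).1, fun i => (main i).2⟩
end

section
/- Let e_1, …, e_k ∈ {+1,−1}^n. Call a pair (R, λ) ∈ ℝ^n × ℝ^k feasible if λ^i ≥ 0 for all i, λ^1 + ⋯ + λ^k = 1, and R − ∑_{i=1}^k λ^i e_i ∈ Q*. Then a feasible pair (R, λ) minimizes ½⟨R,R⟩ over all feasible pairs (i.e. ⟨R,R⟩ ≤ ⟨S,S⟩ for every feasible (S, μ)) if and only if R ∈ Q and ⟨e_i, R⟩ ≥ ⟨R, R⟩ for all i = 1, …, k. -/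
/-- Feasibility for the quadratic program associated to `e₁,…,e_k`. -/
def Feasible {n k : ℕ} (e : Fin k → Fin n → ℝ) (R : Fin n → ℝ) (lam : Fin k → ℝ) : Prop :=
  (∀ i, 0 ≤ lam i) ∧ (∑ i, lam i = 1) ∧
    inQdual (fun j => R j - ∑ i, lam i * e i j)

private lemma limit_lemma {b c : ℝ} (hb : 0 ≤ b)
    (h : ∀ t : ℝ, 0 < t → t ≤ 1 → 0 ≤ 2 * t * c + t ^ 2 * b) : 0 ≤ c := by
  by_contra hc
  push_neg at hc
  have hb1 : (0:ℝ) < b + 1 := by linarith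
  set t : ℝ := min 1 (-c / (b + 1)) with ht
  have ht0 : 0 < t := lt_min one_pos (div_pos (neg_pos.mpr hc) hb1)
  have ht1 : t ≤ 1 := min_le_left _ _
  have ht2 : t ≤ -c / (b + 1) := min_le_right _ _
  have h3 : t * (b + 1) ≤ -c := (le_div_iff₀ hb1).mp ht2
  have h4 := h t ht0 ht1
  nlinarith [mul_le_mul_of_nonneg_left h3 ht0.le, mul_pos ht0 (neg_pos.mpr hc)]

private lemma expand_sq {n : ℕ} (x y : Fin n → ℝ) (t : ℝ) :
    ∑ j, (x j + t * y j) * (x j + t * y j)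
      = ∑ j, x j * x j + 2 * t * ∑ j, x j * y j + t ^ 2 * ∑ j, y j * y j := by
  simp only [Finset.mul_sum, ← Finset.sum_add_distrib]
  exact Finset.sum_congr rfl fun j _ => by ring

theorem stmt_13 (n k : ℕ) (e : Fin k → Fin n → ℝ)
    (he : ∀ i j, e i j = 1 ∨ e i j = -1)
    (R : Fin n → ℝ) (lam : Fin k → ℝ) (hfeas : Feasible e R lam) :
    (∀ (S : Fin n → ℝ) (mu : Fin k → ℝ), Feasible e S mu →
        ∑ j, R j * R j ≤ ∑ j, S j * S j)
      ↔
    (inQ R ∧ ∀ i, ∑ j, R j * R j ≤ ∑ j, e i j * R j) := by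
  obtain ⟨hlam0, hlam1, hQdR⟩ := hfeas
  constructor
  · intro hmin
    -- Key claim: for any feasible (S, mu), ⟨S,R⟩ ≥ ⟨R,R⟩
    have key : ∀ (S : Fin n → ℝ) (mu : Fin k → ℝ), Feasible e S mu →
        ∑ j, R j * R j ≤ ∑ j, S j * R j := by
      intro S mu ⟨hmu0, hmu1, hQdS⟩
      have hlim : ∀ t : ℝ, 0 < t → t ≤ 1 →
          0 ≤ 2 * t * (∑ j, R j * (S j - R j)) + t ^ 2 * ∑ j, (S j - R j) * (S j - R j) := by
        intro t ht0 ht1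
        have hfeast : Feasible e (fun j => R j + t * (S j - R j))
            (fun i => lam i + t * (mu i - lam i)) := by
          refine ⟨?_, ?_, ?_⟩
          · intro i
            dsimp only
            nlinarith [hlam0 i, hmu0 i, mul_nonneg (by linarith : (0:ℝ) ≤ 1 - t) (hlam0 i),
              mul_nonneg ht0.le (hmu0 i)]
          · have : ∑ i, (lam i + t * (mu i - lam i))
                = (∑ i, lam i) + t * ((∑ i, mu i) - (∑ i, lam i)) := by
              simp only [mul_sub, Finset.mul_sum, ← Finset.sum_sub_distrib,
                ← Finset.sum_add_distrib]
              try exact Finset.sum_congr rfl fun i _ => by ring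
            rw [this, hlam1, hmu1]; ring
          · intro a ha
            have hsum : ∀ j, (R j + t * (S j - R j)) - ∑ i, (lam i + t * (mu i - lam i)) * e i j
                = (1 - t) * (R j - ∑ i, lam i * e i j) + t * (S j - ∑ i, mu i * e i j) := by
              intro j
              have : ∑ i, (lam i + t * (mu i - lam i)) * e i j
                  = (∑ i, lam i * e i j) + t * ((∑ i, mu i * e i j) - (∑ i, lam i * e i j)) := by
                simp only [mul_sub, Finset.mul_sum, ← Finset.sum_sub_distrib,
                  ← Finset.sum_add_distrib]
                exact Finset.sum_congr rfl fun i _ => by ring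
              rw [this]; ring
            have h1 := hQdR a ha
            have h2 := hQdS a ha
            simp only [hsum]
            have : ∑ j, ((1 - t) * (R j - ∑ i, lam i * e i j)
                  + t * (S j - ∑ i, mu i * e i j)) * a j
                = (1 - t) * (∑ j, (R j - ∑ i, lam i * e i j) * a j)
                  + t * (∑ j, (S j - ∑ i, mu i * e i j) * a j) := by
              simp only [Finset.mul_sum, ← Finset.sum_add_distrib]
              exact Finset.sum_congr rfl fun j _ => by ring
            rw [this]
            have h1t : 0 ≤ (1 - t) * (∑ j, (R j - ∑ i, lam i * e i j) * a j) :=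
              mul_nonneg (by linarith) h1
            have h2t : 0 ≤ t * (∑ j, (S j - ∑ i, mu i * e i j) * a j) :=
              mul_nonneg ht0.le h2
            linarith
        have := hmin _ _ hfeast
        rw [expand_sq R (fun j => S j - R j) t] at this
        linarith
      have := limit_lemma (Finset.sum_nonneg fun j _ => mul_self_nonneg _) hlim
      have hrw : ∑ j, R j * (S j - R j) = (∑ j, S j * R j) - ∑ j, R j * R j := by
        simp only [← Finset.sum_sub_distrib]
        exact Finset.sum_congr rfl fun j _ => by ring
      rw [hrw] at this
      linarith
    -- R is in Q** hence related duals
    have hQstar : ∀ V : Fin n → ℝ, inQdual V → 0 ≤ ∑ j, V j * R j := by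
      intro V hV
      have hfeasV : Feasible e (fun j => R j + V j) lam := by
        refine ⟨hlam0, hlam1, ?_⟩
        intro a ha
        have h1 := hQdR a ha
        have h2 := hV a ha
        have : ∑ j, ((R j + V j) - ∑ i, lam i * e i j) * a j
            = (∑ j, (R j - ∑ i, lam i * e i j) * a j) + ∑ j, V j * a j := by
          simp only [← Finset.sum_add_distrib]
          exact Finset.sum_congr rfl fun j _ => by ring
        simp only [this]
        linarith
      have := key _ _ hfeasV
      have hrw : ∑ j, (R j + V j) * R j = (∑ j, R j * R j) + ∑ j, V j * R j := by
        simp only [← Finset.sum_add_distrib]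
        exact Finset.sum_congr rfl fun j _ => by ring
      rw [hrw] at this
      linarith
    constructor
    · constructor
      · intro i j hij
        have hV : inQdual (fun m => (if m = i then (1:ℝ) else 0) - (if m = j then 1 else 0)) := by
          intro a ha
          have : ∑ m, ((if m = i then (1:ℝ) else 0) - (if m = j then 1 else 0)) * a m
              = a i - a j := by
            simp only [sub_mul, Finset.sum_sub_distrib, ite_mul, one_mul, zero_mul,
              Finset.sum_ite_eq', Finset.mem_univ, if_true]
          rw [this]
          have := ha.1 i j hij
          linarith
        have := hQstar _ hV
        have hrw : ∑ m, ((if m = i then (1:ℝ) else 0) - (if m = j then 1 else 0)) * R m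
            = R i - R j := by
          simp only [sub_mul, Finset.sum_sub_distrib, ite_mul, one_mul, zero_mul,
            Finset.sum_ite_eq', Finset.mem_univ, if_true]
        rw [hrw] at this
        linarith
      · intro i
        have hV : inQdual (fun m => if m = i then (1:ℝ) else 0) := by
          intro a ha
          have : ∑ m, (if m = i then (1:ℝ) else 0) * a m = a i := by
            simp only [ite_mul, one_mul, zero_mul, Finset.sum_ite_eq', Finset.mem_univ, if_true]
          rw [this]
          exact ha.2 i
        have := hQstar _ hV
        have hrw : ∑ m, (if m = i then (1:ℝ) else 0) * R m = R i := by
          simp only [ite_mul, one_mul, zero_mul, Finset.sum_ite_eq', Finset.mem_univ, if_true]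
        rw [hrw] at this
        linarith
    · intro i
      have hfeasi : Feasible e (e i) (fun m => if m = i then 1 else 0) := by
        refine ⟨fun m => by positivity, ?_, ?_⟩
        · simp [Finset.sum_ite_eq', Finset.mem_univ]
        · intro a ha
          have : ∀ j, e i j - ∑ m, (if m = i then (1:ℝ) else 0) * e m j = 0 := by
            intro j
            simp only [ite_mul, one_mul, zero_mul, Finset.sum_ite_eq', Finset.mem_univ, if_true,
              sub_self]
          simp only [this, zero_mul, Finset.sum_const_zero, le_refl]
      have := key _ _ hfeasi
      exact this
  · rintro ⟨hRQ, hei⟩ S mu ⟨hmu0, hmu1, hQdS⟩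
    -- ⟨S,R⟩ ≥ ⟨R,R⟩
    have hsplit : ∑ j, S j * R j
        = (∑ j, (S j - ∑ i, mu i * e i j) * R j) + ∑ i, mu i * ∑ j, e i j * R j := by
      have h1 : ∑ j, (∑ i, mu i * e i j) * R j = ∑ i, mu i * ∑ j, e i j * R j := by
        calc ∑ j, (∑ i, mu i * e i j) * R j
            = ∑ j, ∑ i, mu i * (e i j * R j) := Finset.sum_congr rfl fun j _ => by
              rw [Finset.sum_mul]; exact Finset.sum_congr rfl fun i _ => by ring
          _ = ∑ i, ∑ j, mu i * (e i j * R j) := Finset.sum_comm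
          _ = ∑ i, mu i * ∑ j, e i j * R j := Finset.sum_congr rfl fun i _ =>
              (Finset.mul_sum _ _ _).symm
      rw [← h1, ← Finset.sum_add_distrib]
      exact Finset.sum_congr rfl fun j _ => by ring
    have h2 : 0 ≤ ∑ j, (S j - ∑ i, mu i * e i j) * R j := hQdS R hRQ
    have h3 : (∑ j, R j * R j) ≤ ∑ i, mu i * ∑ j, e i j * R j := by
      calc (∑ j, R j * R j) = ∑ i, mu i * ∑ j, R j * R j := by
            rw [← Finset.sum_mul, hmu1, one_mul]
        _ ≤ ∑ i, mu i * ∑ j, e i j * R j :=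
            Finset.sum_le_sum fun i _ => mul_le_mul_of_nonneg_left (hei i) (hmu0 i)
    have hSR : (∑ j, R j * R j) ≤ ∑ j, S j * R j := by rw [hsplit]; linarith
    have hsq : 0 ≤ ∑ j, (S j - R j) * (S j - R j) :=
      Finset.sum_nonneg fun j _ => mul_self_nonneg _
    have hexp : ∑ j, (S j - R j) * (S j - R j)
        = (∑ j, S j * S j) - 2 * (∑ j, S j * R j) + ∑ j, R j * R j := by
      simp only [mul_sub, sub_mul, Finset.mul_sum, ← Finset.sum_sub_distrib,
        ← Finset.sum_add_distrib]
      exact Finset.sum_congr rfl fun j _ => by ring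
    linarith [hexp ▸ hsq]
end

section
/- Let e_1, …, e_k ∈ {+1,−1}^n. Suppose (R, λ) ∈ ℝ^n × ℝ^k satisfies: λ^i ≥ 0 for all i, λ^1 + ⋯ + λ^k = 1, R − ∑λ^i e_i ∈ Q*, R ∈ Q, and ⟨e_i, R⟩ ≥ ⟨R, R⟩ for all i. Suppose (S, μ) ∈ ℝ^n × ℝ^k satisfies: μ^i ≥ 0 for all i, μ^1 + ⋯ + μ^k = 1, and S − ∑μ^i e_i ∈ Q*. Then ⟨S,S⟩ − ⟨R,R⟩ ≥ ⟨S−R, S−R⟩. In particular, there is exactly one R ∈ ℝ^n for which there exists λ satisfying the first set of conditions. -/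
/-- The optimality conditions of Theorem `SQP`: feasibility together with
`R ∈ Q` and `⟨e i, R⟩ ≥ ⟨R, R⟩` for all `i`. -/
def OptCond {n k : ℕ} (e : Fin k → Fin n → ℝ) (R : Fin n → ℝ) (lam : Fin k → ℝ) : Prop :=
  (∀ i, 0 ≤ lam i) ∧ (∑ i, lam i = 1) ∧
    inQdual (fun j => R j - ∑ i, lam i * e i j) ∧
    inQ R ∧ (∀ i, ∑ j, R j * R j ≤ ∑ j, e i j * R j)

lemma aux_key {n k : ℕ} (e : Fin k → Fin n → ℝ)
    (R : Fin n → ℝ) (lam : Fin k → ℝ) (hR : OptCond e R lam)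
    (S : Fin n → ℝ) (mu : Fin k → ℝ)
    (hmu : ∀ i, 0 ≤ mu i) (hmusum : ∑ i, mu i = 1)
    (hS : inQdual (fun j => S j - ∑ i, mu i * e i j)) :
    ∑ j, (S j - R j) * (S j - R j) ≤ ∑ j, S j * S j - ∑ j, R j * R j := by
  obtain ⟨_, _, _, hRQ, hER⟩ := hR
  have h1 : 0 ≤ ∑ j, (S j - ∑ i, mu i * e i j) * R j := hS R hRQ
  have h2 : ∑ j, (∑ i, mu i * e i j) * R j = ∑ i, mu i * ∑ j, e i j * R j := by
    simp_rw [Finset.sum_mul]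
    rw [Finset.sum_comm]
    refine Finset.sum_congr rfl fun i _ => ?_
    rw [Finset.mul_sum]
    exact Finset.sum_congr rfl fun j _ => by ring
  have h3 : ∑ i, mu i * (∑ j, R j * R j) ≤ ∑ i, mu i * ∑ j, e i j * R j :=
    Finset.sum_le_sum fun i _ => mul_le_mul_of_nonneg_left (hER i) (hmu i)
  have h4 : ∑ i, mu i * (∑ j, R j * R j) = ∑ j, R j * R j := by
    rw [← Finset.sum_mul, hmusum, one_mul]
  have h5 : ∑ j, (S j - ∑ i, mu i * e i j) * R j
      = ∑ j, S j * R j - ∑ j, (∑ i, mu i * e i j) * R j := by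
    rw [← Finset.sum_sub_distrib]
    exact Finset.sum_congr rfl fun j _ => by ring
  have h6 : ∑ j, R j * R j ≤ ∑ j, S j * R j := by
    rw [h5, h2] at h1; linarith
  have hexp : ∑ j, (S j - R j) * (S j - R j)
      = ∑ j, S j * S j - 2 * ∑ j, S j * R j + ∑ j, R j * R j := by
    rw [Finset.mul_sum, ← Finset.sum_sub_distrib, ← Finset.sum_add_distrib]
    exact Finset.sum_congr rfl fun j _ => by ring
  linarith

theorem stmt_14 (n k : ℕ) (e : Fin k → Fin n → ℝ)
    (he : ∀ i j, e i j = 1 ∨ e i j = -1)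
    (R : Fin n → ℝ) (lam : Fin k → ℝ) (hR : OptCond e R lam)
    (S : Fin n → ℝ) (mu : Fin k → ℝ)
    (hmu : ∀ i, 0 ≤ mu i) (hmusum : ∑ i, mu i = 1)
    (hS : inQdual (fun j => S j - ∑ i, mu i * e i j)) :
    (∑ j, (S j - R j) * (S j - R j) ≤ ∑ j, S j * S j - ∑ j, R j * R j) ∧
    (∀ (R' : Fin n → ℝ) (lam' : Fin k → ℝ), OptCond e R' lam' → R' = R) := by
  refine ⟨aux_key e R lam hR S mu hmu hmusum hS, fun R' lam' hR' => ?_⟩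
  have hA := aux_key e R lam hR R' lam' hR'.1 hR'.2.1 hR'.2.2.1
  have hB := aux_key e R' lam' hR' R lam hR.1 hR.2.1 hR.2.2.1
  have hsum : ∑ j, (R' j - R j) * (R' j - R j) + ∑ j, (R j - R' j) * (R j - R' j) ≤ 0 := by
    linarith
  have heq : ∀ j, R' j = R j := by
    intro j
    by_contra hne
    have hpos : 0 < (R' j - R j) * (R' j - R j) := by
      exact mul_self_pos.mpr (sub_ne_zero.mpr hne)
    have h1 : (R' j - R j) * (R' j - R j) ≤ ∑ j, (R' j - R j) * (R' j - R j) :=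
      Finset.single_le_sum (f := fun j => (R' j - R j) * (R' j - R j)) (fun j _ => mul_self_nonneg _) (Finset.mem_univ j)
    have h2 : (0:ℝ) ≤ ∑ j, (R j - R' j) * (R j - R' j) :=
      Finset.sum_nonneg fun j _ => mul_self_nonneg _
    linarith
  funext j; exact heq j
end

section
/- Let e_1 = (1,1,1,1,1,1,−1,1,−1), e_2 = (1,−1,−1,−1,−1,−1,1,−1,1), e_3 = (1,1,−1,1,−1,−1,1,−1,1), e_4 = (1,−1,1,−1,1,1,−1,1,−1) in {+1,−1}^9 (these are ε_5, ε_250, ε_90, ε_165 in the binary enumeration). Then (e_1, e_2, e_3, e_4) is a 4-tuplet: for every a ∈ Q, at least 2 of the 4 numbers |e_1 a|, |e_2 a|, |e_3 a|, |e_4 a| are ≤ ‖a‖. -/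
lemma certA (a0 a1 a2 a3 a4 a5 a6 a7 a8 : ℝ) (h0 : a1 ≤ a0) (h1 : a2 ≤ a1) (h2 : a3 ≤ a2) (h3 : a4 ≤ a3) (h4 : a5 ≤ a4) (h5 : a6 ≤ a5) (h6 : a7 ≤ a6) (h7 : a8 ≤ a7) (h8 : 0 ≤ a8) :
    (-a0+a1+a2+a3+a4+a5-a6+a7-a8)^2 + (a0+a1-a2+a3-a4-a5+a6-a7+a8)^2 + (-a0+a1+a2+a3+a4+a5-a6+a7-a8)*(a0+a1-a2+a3-a4-a5+a6-a7+a8) ≤ 3*(a0^2+a1^2+a2^2+a3^2+a4^2+a5^2+a6^2+a7^2+a8^2) := by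
  have d0 : (0:ℝ) ≤ a0 - a1 := by linarith
  have d1 : (0:ℝ) ≤ a1 - a2 := by linarith
  have d2 : (0:ℝ) ≤ a2 - a3 := by linarith
  have d3 : (0:ℝ) ≤ a3 - a4 := by linarith
  have d4 : (0:ℝ) ≤ a4 - a5 := by linarith
  have d5 : (0:ℝ) ≤ a5 - a6 := by linarith
  have d6 : (0:ℝ) ≤ a6 - a7 := by linarith
  have d7 : (0:ℝ) ≤ a7 - a8 := by linarith
  have d8 : (0:ℝ) ≤ a8 := h8
  linarith [mul_nonneg d0 d0, mul_nonneg d0 d1, mul_nonneg d0 d2, mul_nonneg d0 d3, mul_nonneg d0 d4, mul_nonneg d0 d5, mul_nonneg d0 d6, mul_nonneg d0 d7, mul_nonneg d0 d8, mul_nonneg d1 d1, mul_nonneg d1 d2, mul_nonneg d1 d4, mul_nonneg d1 d5, mul_nonneg d1 d6, mul_nonneg d1 d7, mul_nonneg d1 d8, mul_nonneg d2 d2, mul_nonneg d2 d3, mul_nonneg d2 d4, mul_nonneg d2 d5, mul_nonneg d2 d6, mul_nonneg d2 d7, mul_nonneg d2 d8, mul_nonneg d4 d4, mul_nonneg d4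 d5, mul_nonneg d4 d6, mul_nonneg d4 d7, mul_nonneg d4 d8, mul_nonneg d5 d5, mul_nonneg d5 d6, mul_nonneg d5 d7, mul_nonneg d5 d8, mul_nonneg d6 d6, mul_nonneg d6 d7, mul_nonneg d6 d8, mul_nonneg d7 d7, mul_nonneg d7 d8, mul_nonneg d8 d8]

lemma certB (a0 a1 a2 a3 a4 a5 a6 a7 a8 : ℝ) (h0 : a1 ≤ a0) (h1 : a2 ≤ a1) (h2 : a3 ≤ a2) (h3 : a4 ≤ a3) (h4 : a5 ≤ a4) (h5 : a6 ≤ a5) (h6 : a7 ≤ a6) (h7 : a8 ≤ a7) (h8 : 0 ≤ a8) :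
    (-a0+a1+a2+a3+a4+a5-a6+a7-a8)^2 + 5*(a0-a1+a2-a3+a4+a5-a6+a7-a8)^2 ≤ 6*(a0^2+a1^2+a2^2+a3^2+a4^2+a5^2+a6^2+a7^2+a8^2) := by
  have d0 : (0:ℝ) ≤ a0 - a1 := by linarith
  have d1 : (0:ℝ) ≤ a1 - a2 := by linarith
  have d2 : (0:ℝ) ≤ a2 - a3 := by linarith
  have d3 : (0:ℝ) ≤ a3 - a4 := by linarith
  have d4 : (0:ℝ) ≤ a4 - a5 := by linarith
  have d5 : (0:ℝ) ≤ a5 - a6 := by linarith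
  have d6 : (0:ℝ) ≤ a6 - a7 := by linarith
  have d7 : (0:ℝ) ≤ a7 - a8 := by linarith
  have d8 : (0:ℝ) ≤ a8 := h8
  linarith [mul_nonneg d0 d1, mul_nonneg d0 d2, mul_nonneg d0 d3, mul_nonneg d0 d4, mul_nonneg d0 d6, mul_nonneg d0 d8, mul_nonneg d1 d1, mul_nonneg d1 d2, mul_nonneg d1 d3, mul_nonneg d1 d4, mul_nonneg d1 d5, mul_nonneg d1 d6, mul_nonneg d1 d7, mul_nonneg d1 d8, mul_nonneg d2 d2, mul_nonneg d2 d3, mul_nonneg d2 d4, mul_nonneg d2 d5, mul_nonneg d2 d6, mul_nonneg d2 d7, mul_nonneg d2 d8, mul_nonneg d3 d3, mul_nonneg d3 d4, mul_nonneg d3 d5, mul_nonneg d3 d6, mul_nonneg d3 d7, mul_nonneg d3 d8, mul_nonneg d4 d4, mul_nonneg d4 d5, mul_nonneg d4 d6, mul_nonneg d4 d7, mul_nonneg d4 d8, mul_nonneg d5 d6, mul_nonneg d5 d8, mul_nonneg d6 d6, mul_nonneg d6 d7, mul_nonneg d6 d8, mul_nonneg d7 d7, mul_nonneg d7 d8,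 mul_nonneg d8 d8]

lemma sum9 (f : Fin 9 → ℝ) : ∑ i, f i = f 0 + f 1 + f 2 + f 3 + f 4 + f 5 + f 6 + f 7 + f 8 := by
  rw [Fin.sum_univ_succ, Fin.sum_univ_eight]
  rw [show Fin.succ (0 : Fin 8) = (1 : Fin 9) by decide,
      show Fin.succ (1 : Fin 8) = (2 : Fin 9) by decide,
      show Fin.succ (2 : Fin 8) = (3 : Fin 9) by decide,
      show Fin.succ (3 : Fin 8) = (4 : Fin 9) by decide,
      show Fin.succ (4 : Fin 8) = (5 : Fin 9) by decide,
      show Fin.succ (5 : Fin 8) = (6 : Fin 9) by decide,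
      show Fin.succ (6 : Fin 8) = (7 : Fin 9) by decide,
      show Fin.succ (7 : Fin 8) = (8 : Fin 9) by decide]
  ring

open scoped Classical

set_option maxHeartbeats 1000000 in
theorem stmt_16 (a : Fin 9 → ℝ)
    (hdec : ∀ i j : Fin 9, i ≤ j → a j ≤ a i) (hpos : ∀ i, 0 ≤ a i) :
    2 ≤ ((Finset.univ : Finset (Fin 4)).filter (fun ℓ =>
        |∑ i, (![![1, 1, 1, 1, 1, 1, -1, 1, -1],
                 ![1, -1, -1, -1, -1, -1, 1, -1, 1],
                 ![1, 1, -1, 1, -1, -1, 1, -1, 1],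
                 ![1, -1, 1, -1, 1, 1, -1, 1, -1]] : Fin 4 → Fin 9 → ℝ) ℓ i * a i|
          ≤ Real.sqrt (∑ i, a i ^ 2))).card := by
  set M : Fin 4 → Fin 9 → ℝ :=
    ![![1, 1, 1, 1, 1, 1, -1, 1, -1],
      ![1, -1, -1, -1, -1, -1, 1, -1, 1],
      ![1, 1, -1, 1, -1, -1, 1, -1, 1],
      ![1, -1, 1, -1, 1, 1, -1, 1, -1]] with hM
  have h01 : a 1 ≤ a 0 := hdec 0 1 (by decide)
  have h12 : a 2 ≤ a 1 := hdec 1 2 (by decide)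
  have h23 : a 3 ≤ a 2 := hdec 2 3 (by decide)
  have h34 : a 4 ≤ a 3 := hdec 3 4 (by decide)
  have h45 : a 5 ≤ a 4 := hdec 4 5 (by decide)
  have h56 : a 6 ≤ a 5 := hdec 5 6 (by decide)
  have h67 : a 7 ≤ a 6 := hdec 6 7 (by decide)
  have h78 : a 8 ≤ a 7 := hdec 7 8 (by decide)
  have h8 : 0 ≤ a 8 := hpos 8
  set N : ℝ := Real.sqrt (∑ i, a i ^ 2) with hN
  have hSnn : (0:ℝ) ≤ ∑ i, a i ^ 2 := Finset.sum_nonneg fun i _ => sq_nonneg _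
  have hN0 : 0 ≤ N := Real.sqrt_nonneg _
  have hNsq : N ^ 2 = ∑ i, a i ^ 2 := Real.sq_sqrt hSnn
  have hSexp : ∑ i, a i ^ 2 = a 0^2 + a 1^2 + a 2^2 + a 3^2 + a 4^2 + a 5^2
      + a 6^2 + a 7^2 + a 8^2 := by
    simpa using sum9 fun i => a i ^ 2
  have hs0 : ∑ i, M 0 i * a i = (a 0 + a 1 + a 2 + a 3 + a 4 + a 5 - a 6 + a 7 - a 8) := by
    have h := sum9 fun i => M 0 i * a i
    rw [h]
    simp only [hM, show (![![1, 1, 1, 1, 1, 1, -1, 1, -1], ![1, -1, -1, -1, -1, -1, 1, -1, 1], ![1, 1, -1, 1, -1, -1, 1, -1, 1], ![1, -1, 1, -1, 1, 1, -1, 1, -1]] : Fin 4 → Fin 9 → ℝ) 0 = (![1, 1, 1, 1, 1, 1, -1, 1, -1] : Fin 9 → ℝ) from rfl, show (![1, 1, 1, 1, 1, 1, -1, 1, -1] : Fin 9 → ℝ) 0 = (1:ℝ) from rfl, show (![1, 1, 1, 1, 1, 1, -1, 1, -1] : Fin 9 → ℝ) 1 = (1:ℝ) from rfl, show (![1, 1,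 1, 1, 1, 1, -1, 1, -1] : Fin 9 → ℝ) 2 = (1:ℝ) from rfl, show (![1, 1, 1, 1, 1, 1, -1, 1, -1] : Fin 9 → ℝ) 3 = (1:ℝ) from rfl, show (![1, 1, 1, 1, 1, 1, -1, 1, -1] : Fin 9 → ℝ) 4 = (1:ℝ) from rfl, show (![1, 1, 1, 1, 1, 1, -1, 1, -1] : Fin 9 → ℝ) 5 = (1:ℝ) from rfl, show (![1, 1, 1, 1, 1, 1, -1, 1, -1] : Fin 9 → ℝ) 6 = (-1:ℝ) from rfl, show (![1, 1, 1, 1, 1, 1, -1, 1, -1] : Fin 9 → ℝ) 7 = (1:ℝ) from rfl, show (![1, 1, 1, 1, 1, 1, -1, 1, -1] : Fin 9 → ℝ) 8 = (-1:ℝ) from rfl]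
    ring
  have hs1 : ∑ i, M 1 i * a i = (a 0 - a 1 - a 2 - a 3 - a 4 - a 5 + a 6 - a 7 + a 8) := by
    have h := sum9 fun i => M 1 i * a i
    rw [h]
    simp only [hM, show (![![1, 1, 1, 1, 1, 1, -1, 1, -1], ![1, -1, -1, -1, -1, -1, 1, -1, 1], ![1, 1, -1, 1, -1, -1, 1, -1, 1], ![1, -1, 1, -1, 1, 1, -1, 1, -1]] : Fin 4 → Fin 9 → ℝ) 1 = (![1, -1, -1, -1, -1, -1, 1, -1, 1] : Fin 9 → ℝ) from rfl, show (![1, -1, -1, -1, -1, -1, 1, -1, 1] : Fin 9 → ℝ) 0 = (1:ℝ) from rfl, show (![1, -1, -1, -1, -1, -1, 1, -1, 1] : Fin 9 → ℝ) 1 = (-1:ℝ) from rfl, show (![1, -1, -1, -1, -1, -1, 1, -1, 1] : Fin 9 → ℝ) 2 = (-1:ℝ) from rfl, show (![1, -1, -1, -1, -1, -1, 1, -1, 1] : Fin 9 → ℝ) 3 = (-1:ℝ) from rfl, show (![1, -1, -1, -1, -1, -1, 1, -1, 1] : Fin 9 → ℝ) 4 = (-1:ℝ) from rfl, show (![1,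 -1, -1, -1, -1, -1, 1, -1, 1] : Fin 9 → ℝ) 5 = (-1:ℝ) from rfl, show (![1, -1, -1, -1, -1, -1, 1, -1, 1] : Fin 9 → ℝ) 6 = (1:ℝ) from rfl, show (![1, -1, -1, -1, -1, -1, 1, -1, 1] : Fin 9 → ℝ) 7 = (-1:ℝ) from rfl, show (![1, -1, -1, -1, -1, -1, 1, -1, 1] : Fin 9 → ℝ) 8 = (1:ℝ) from rfl]
    ring
  have hs2 : ∑ i, M 2 i * a i = (a 0 + a 1 - a 2 + a 3 - a 4 - a 5 + a 6 - a 7 + a 8) := by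
    have h := sum9 fun i => M 2 i * a i
    rw [h]
    simp only [hM, show (![![1, 1, 1, 1, 1, 1, -1, 1, -1], ![1, -1, -1, -1, -1, -1, 1, -1, 1], ![1, 1, -1, 1, -1, -1, 1, -1, 1], ![1, -1, 1, -1, 1, 1, -1, 1, -1]] : Fin 4 → Fin 9 → ℝ) 2 = (![1, 1, -1, 1, -1, -1, 1, -1, 1] : Fin 9 → ℝ) from rfl, show (![1, 1, -1, 1, -1, -1, 1, -1, 1] : Fin 9 → ℝ) 0 = (1:ℝ) from rfl, show (![1, 1, -1, 1, -1, -1, 1, -1, 1] : Fin 9 → ℝ) 1 = (1:ℝ) from rfl, show (![1, 1, -1, 1, -1, -1, 1, -1, 1] : Fin 9 → ℝ) 2 = (-1:ℝ) from rfl, show (![1, 1, -1, 1, -1, -1, 1, -1, 1] : Fin 9 → ℝ) 3 = (1:ℝ) from rfl, show (![1, 1, -1, 1, -1, -1, 1, -1, 1] : Fin 9 → ℝ) 4 = (-1:ℝ) from rfl, show (![1, 1, -1, 1, -1, -1, 1, -1, 1] : Fin 9 → ℝ) 5 = (-1:ℝ) from rfl, show (![1, 1, -1, 1, -1, -1, 1,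 -1, 1] : Fin 9 → ℝ) 6 = (1:ℝ) from rfl, show (![1, 1, -1, 1, -1, -1, 1, -1, 1] : Fin 9 → ℝ) 7 = (-1:ℝ) from rfl, show (![1, 1, -1, 1, -1, -1, 1, -1, 1] : Fin 9 → ℝ) 8 = (1:ℝ) from rfl]
    ring
  have hs3 : ∑ i, M 3 i * a i = (a 0 - a 1 + a 2 - a 3 + a 4 + a 5 - a 6 + a 7 - a 8) := by
    have h := sum9 fun i => M 3 i * a i
    rw [h]
    simp only [hM, show (![![1, 1, 1, 1, 1, 1, -1, 1, -1], ![1, -1, -1, -1, -1, -1, 1, -1, 1], ![1, 1, -1, 1, -1, -1, 1, -1, 1], ![1, -1, 1, -1, 1, 1, -1, 1, -1]] : Fin 4 → Fin 9 → ℝ) 3 = (![1, -1, 1, -1, 1, 1, -1, 1, -1] : Fin 9 → ℝ) from rfl, show (![1, -1, 1, -1, 1, 1, -1, 1, -1] : Fin 9 → ℝ) 0 = (1:ℝ) from rfl, show (![1, -1, 1, -1, 1, 1, -1, 1, -1] : Fin 9 → ℝ) 1 = (-1:ℝ) from rfl, show (![1, -1, 1, -1, 1, 1, -1, 1, -1]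 : Fin 9 → ℝ) 2 = (1:ℝ) from rfl, show (![1, -1, 1, -1, 1, 1, -1, 1, -1] : Fin 9 → ℝ) 3 = (-1:ℝ) from rfl, show (![1, -1, 1, -1, 1, 1, -1, 1, -1] : Fin 9 → ℝ) 4 = (1:ℝ) from rfl, show (![1, -1, 1, -1, 1, 1, -1, 1, -1] : Fin 9 → ℝ) 5 = (1:ℝ) from rfl, show (![1, -1, 1, -1, 1, 1, -1, 1, -1] : Fin 9 → ℝ) 6 = (-1:ℝ) from rfl, show (![1, -1, 1, -1, 1, 1, -1, 1, -1] : Fin 9 → ℝ) 7 = (1:ℝ) from rfl, show (![1, -1, 1, -1, 1, 1, -1, 1, -1] : Fin 9 → ℝ) 8 = (-1:ℝ) from rfl]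
    ring
  have ha0N : a 0 ≤ N := by
    by_contra hgt
    push_neg at hgt
    have hsq := mul_lt_mul'' hgt hgt hN0 hN0
    linarith [hNsq, hSexp, sq_nonneg (a 1), sq_nonneg (a 2), sq_nonneg (a 3),
      sq_nonneg (a 4), sq_nonneg (a 5), sq_nonneg (a 6), sq_nonneg (a 7),
      sq_nonneg (a 8), hsq]
  have certA' := certA (a 0) (a 1) (a 2) (a 3) (a 4) (a 5) (a 6) (a 7) (a 8)
    h01 h12 h23 h34 h45 h56 h67 h78 h8
  have certB' := certB (a 0) (a 1) (a 2) (a 3) (a 4) (a 5) (a 6) (a 7) (a 8)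
    h01 h12 h23 h34 h45 h56 h67 h78 h8
  have caseA : ¬ (N < (-a 0 + a 1 + a 2 + a 3 + a 4 + a 5 - a 6 + a 7 - a 8) ∧ N < (a 0 + a 1 - a 2 + a 3 - a 4 - a 5 + a 6 - a 7 + a 8)) := by
    rintro ⟨hu, hv⟩
    have h1 : N * N < (-a 0 + a 1 + a 2 + a 3 + a 4 + a 5 - a 6 + a 7 - a 8) * (a 0 + a 1 - a 2 + a 3 - a 4 - a 5 + a 6 - a 7 + a 8) := mul_lt_mul'' hu hv hN0 hN0
    have h2 : N * N < (-a 0 + a 1 + a 2 + a 3 + a 4 + a 5 - a 6 + a 7 - a 8) * (-a 0 + a 1 + a 2 + a 3 + a 4 + a 5 - a 6 + a 7 - a 8) := mul_lt_mul'' hu hu hN0 hN0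
    have h3 : N * N < (a 0 + a 1 - a 2 + a 3 - a 4 - a 5 + a 6 - a 7 + a 8) * (a 0 + a 1 - a 2 + a 3 - a 4 - a 5 + a 6 - a 7 + a 8) := mul_lt_mul'' hv hv hN0 hN0
    linarith [certA', hNsq, hSexp, h1, h2, h3]
  have caseB : ¬ (N < (-a 0 + a 1 + a 2 + a 3 + a 4 + a 5 - a 6 + a 7 - a 8) ∧ N < (a 0 - a 1 + a 2 - a 3 + a 4 + a 5 - a 6 + a 7 - a 8)) := by
    rintro ⟨hu, hw⟩
    have h2 : N * N < (-a 0 + a 1 + a 2 + a 3 + a 4 + a 5 - a 6 + a 7 - a 8) * (-a 0 + a 1 + a 2 + a 3 + a 4 + a 5 - a 6 + a 7 - a 8) := mul_lt_mul'' hu hu hN0 hN0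
    have h3 : N * N < (a 0 - a 1 + a 2 - a 3 + a 4 + a 5 - a 6 + a 7 - a 8) * (a 0 - a 1 + a 2 - a 3 + a 4 + a 5 - a 6 + a 7 - a 8) := mul_lt_mul'' hw hw hN0 hN0
    linarith [certB', hNsq, hSexp, h2, h3]
  have pair2 : |(a 0 + a 1 - a 2 + a 3 - a 4 - a 5 + a 6 - a 7 + a 8)| ≤ N ∨ |(a 0 - a 1 + a 2 - a 3 + a 4 + a 5 - a 6 + a 7 - a 8)| ≤ N := by
    by_contra hcon
    push_neg at hcon
    obtain ⟨hc3, hc4⟩ := hcon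
    have hv : N < (a 0 + a 1 - a 2 + a 3 - a 4 - a 5 + a 6 - a 7 + a 8) := by
      rcases lt_abs.mp hc3 with h | h
      · exact h
      · linarith
    rcases lt_abs.mp hc4 with h | h
    · linarith
    · exact caseA ⟨by linarith [hpos 0], hv⟩
  have pair1fail : ¬ |(a 0 + a 1 + a 2 + a 3 + a 4 + a 5 - a 6 + a 7 - a 8)| ≤ N → ¬ |(a 0 - a 1 - a 2 - a 3 - a 4 - a 5 + a 6 - a 7 + a 8)| ≤ N →
      |(a 0 + a 1 - a 2 + a 3 - a 4 - a 5 + a 6 - a 7 + a 8)| ≤ N ∧ |(a 0 - a 1 + a 2 - a 3 + a 4 + a 5 - a 6 + a 7 - a 8)| ≤ N := by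
    intro hc1 hc2
    have hb1 : N < (a 0 + a 1 + a 2 + a 3 + a 4 + a 5 - a 6 + a 7 - a 8) := by
      rcases lt_abs.mp (lt_of_not_ge hc1) with h | h
      · exact h
      · linarith
    have hu : N < (-a 0 + a 1 + a 2 + a 3 + a 4 + a 5 - a 6 + a 7 - a 8) := by
      rcases lt_abs.mp (lt_of_not_ge hc2) with h | h
      · exfalso; linarith
      · linarith
    constructor
    · rw [abs_le]
      refine ⟨by linarith, ?_⟩
      by_contra hgt
      exact caseA ⟨hu, lt_of_not_ge hgt⟩
    · rw [abs_le]
      constructor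
      · by_contra hlt
        push_neg at hlt
        exact caseA ⟨hu, by linarith [hpos 0]⟩
      · by_contra hgt
        exact caseB ⟨hu, lt_of_not_ge hgt⟩
  have mem_of : ∀ ℓ : Fin 4, ∀ s : ℝ, (∑ i, M ℓ i * a i = s) → |s| ≤ N →
      ℓ ∈ (Finset.univ : Finset (Fin 4)).filter (fun ℓ =>
        |∑ i, M ℓ i * a i| ≤ N) := by
    intro ℓ s he hle
    exact Finset.mem_filter.mpr ⟨Finset.mem_univ _, by rw [he]; exact hle⟩
  by_cases hp1 : |(a 0 + a 1 + a 2 + a 3 + a 4 + a 5 - a 6 + a 7 - a 8)| ≤ N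
  · rcases pair2 with h3 | h4
    · exact Finset.one_lt_card.mpr ⟨0, mem_of 0 _ hs0 hp1, 2, mem_of 2 _ hs2 h3, by decide⟩
    · exact Finset.one_lt_card.mpr ⟨0, mem_of 0 _ hs0 hp1, 3, mem_of 3 _ hs3 h4, by decide⟩
  · by_cases hp2 : |(a 0 - a 1 - a 2 - a 3 - a 4 - a 5 + a 6 - a 7 + a 8)| ≤ N
    · rcases pair2 with h3 | h4
      · exact Finset.one_lt_card.mpr ⟨1, mem_of 1 _ hs1 hp2, 2, mem_of 2 _ hs2 h3, by decide⟩
      · exact Finset.one_lt_card.mpr ⟨1, mem_of 1 _ hs1 hp2, 3, mem_of 3 _ hs3 h4, by decide⟩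
    · obtain ⟨h3, h4⟩ := pair1fail hp1 hp2
      exact Finset.one_lt_card.mpr ⟨2, mem_of 2 _ hs2 h3, 3, mem_of 3 _ hs3 h4, by decide⟩
end
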